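/- Let (X, dX) and (Y, dY) be d-spaces with (Y, dY) saturated, and let f : X → Y be a continuous map. Suppose that for every open V ⊆ Y and every directed function c on V, the map c ∘ f is a directed function on the open subset f⁻¹(V) of X. Then f is a morphism of d-spaces, i.e., f ∘ p ∈ dY for every p ∈ dX. -/
import Mathlib


open unitInterval Topology Set

/-- Concatenation of two continuous paths `p q : C(I, X)` with `p 1 = q 0`,
traversing `p` on `[0, 1/2]` and `q` on `[1/2, 1]` (both at double speed). -/
noncomputable def concatPath {X : Type*} [TopologicalSpace X]
    (p q : C(unitInterval, X)) (h : p 1 = q 0) : C(unitInterval, X) :=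
  ((⟨p, rfl, rfl⟩ : Path (p 0) (p 1)).trans
    ((⟨q, rfl, rfl⟩ : Path (q 0) (q 1)).cast h rfl)).toContinuousMap

/-- A d-space structure on a topological space `X`: a set of continuous paths
`I → X` containing the constant paths, closed under concatenation and under
precomposition with continuous non-decreasing maps `I → I`. -/
structure DSpace (X : Type*) [TopologicalSpace X] where
  d : Set C(unitInterval, X)
  const_mem : ∀ x : X, ContinuousMap.const unitInterval x ∈ d
  concat_mem : ∀ p ∈ d, ∀ q ∈ d, ∀ h : p 1 = q 0, concatPath p q h ∈ d
  reparam_mem : ∀ p ∈ d, ∀ φ : C(unitInterval, unitInterval), Monotone ⇑φ → p.comp φ ∈ d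

/-- `c` is a directed function on the (open) set `U` for the set of directed
paths `d`: it is continuous on `U` and non-decreasing along every directed path
with image contained in `U`. -/
def IsDirectedFn {X : Type*} [TopologicalSpace X] (d : Set C(unitInterval, X))
    (U : Set X) (c : X → unitInterval) : Prop :=
  ContinuousOn c U ∧ ∀ p ∈ d, Set.range ⇑p ⊆ U → Monotone (c ∘ ⇑p)

/-- A path `p` is weakly directed when, for every directed function `c` on an
open `U`, the map `c ∘ p` is locally non-decreasing on `p ⁻¹' U`. -/
def IsWeaklyDirected {X : Type*} [TopologicalSpace X] (d : Set C(unitInterval, X))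
    (p : C(unitInterval, X)) : Prop :=
  ∀ U : Set X, IsOpen U → ∀ c : X → unitInterval, IsDirectedFn d U c →
    ∀ t : unitInterval, p t ∈ U →
      ∃ V ∈ 𝓝 t, V ⊆ ⇑p ⁻¹' U ∧ MonotoneOn (c ∘ ⇑p) V

/-- The set `d̂X` of weakly directed paths. -/
def satPaths {X : Type*} [TopologicalSpace X] (d : Set C(unitInterval, X)) :
    Set C(unitInterval, X) :=
  {p | IsWeaklyDirected d p}

/-- A set of directed paths is saturated when every weakly directed path is directed. -/
def IsSaturated {X : Type*} [TopologicalSpace X] (d : Set C(unitInterval, X)) : Prop :=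
  satPaths d = d

/-- A continuous map into a saturated d-space which pulls back (local) directed
functions to (local) directed functions is a morphism of d-spaces. -/
theorem stmt_7 {X Y : Type*} [TopologicalSpace X] [TopologicalSpace Y]
    (D : DSpace X) (E : DSpace Y) (hE : IsSaturated E.d) (f : C(X, Y))
    (h : ∀ V : Set Y, IsOpen V → ∀ c : Y → unitInterval, IsDirectedFn E.d V c →
      IsDirectedFn D.d (f ⁻¹' V) (c ∘ f)) :
    ∀ p ∈ D.d, f.comp p ∈ E.d := by
  intro p hp
  rw [← hE]
  intro U hU c hc t ht
  have hc' := h U hU c hc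
  have hW : IsOpen (⇑p ⁻¹' (⇑f ⁻¹' U)) :=
    (hU.preimage f.continuous).preimage p.continuous
  have htW : t ∈ ⇑p ⁻¹' (⇑f ⁻¹' U) := ht
  obtain ⟨a, b, hab, hnh, hsub⟩ := exists_Icc_mem_subset_of_mem_nhds (hW.mem_nhds htW)
  have hle : a ≤ b := hab.1.trans hab.2
  refine ⟨Icc a b, hnh, fun x hx => hsub hx, ?_⟩
  set φ : C(unitInterval, unitInterval) :=
    ⟨fun s => min b (max a s), continuous_const.min (continuous_const.max continuous_id)⟩ with hφ
  have hmono : Monotone ⇑φ := fun x y hxy =>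
    min_le_min le_rfl (max_le_max le_rfl hxy)
  have hpd : p.comp φ ∈ D.d := D.reparam_mem p hp φ hmono
  have hrange : Set.range ⇑(p.comp φ) ⊆ ⇑f ⁻¹' U := by
    rintro _ ⟨s, rfl⟩
    exact hsub ⟨le_min hle (le_max_left _ _), min_le_left _ _⟩
  have hmono2 := hc'.2 (p.comp φ) hpd hrange
  intro x hx y hy hxy
  have hφx : φ x = x := by
    simp only [hφ, ContinuousMap.coe_mk]
    rw [max_eq_right hx.1, min_eq_right hx.2]
  have hφy : φ y = y := by
    simp only [hφ, ContinuousMap.coe_mk]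
    rw [max_eq_right hy.1, min_eq_right hy.2]
  have := hmono2 hxy
  simpa [ContinuousMap.comp_apply, hφx, hφy, Function.comp] using this
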